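/- If H is a q-Dress group and N ⊴ H, then H/N is a q-Dress group. -/

import Mathlib

/-- `N` is `O^q(H)`: the smallest normal subgroup of `H` whose quotient is a `q`-group. -/
def IsOUpper (q : ℕ) {H : Type*} [Group H] (N : Subgroup H) : Prop :=
  ∃ hN : N.Normal,
    (letI := hN; IsPGroup q (H ⧸ N)) ∧
      ∀ M : Subgroup H, ∀ hM : M.Normal, (letI := hM; IsPGroup q (H ⧸ M)) → N ≤ M

/-- `N` is `O_r(H)`: the largest normal `r`-subgroup of `H`. -/
def IsOLower (r : ℕ) {H : Type*} [Group H] (N : Subgroup H) : Prop :=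
  N.Normal ∧ IsPGroup r N ∧ ∀ M : Subgroup H, M.Normal → IsPGroup r M → M ≤ N

/-- `H` is `r`-hypoelementary: `H / O_r(H)` is cyclic. -/
def IsRHypoelementary (r : ℕ) (H : Type*) [Group H] : Prop :=
  ∃ N : Subgroup H, ∃ hN : IsOLower r N, (letI := hN.1; IsCyclic (H ⧸ N))

/-- `H` is `q`-Dress (relative to the prime `p`): `O^q(H)` is `p`-hypoelementary. -/
def IsQDress (p q : ℕ) (H : Type*) [Group H] : Prop :=
  ∃ N : Subgroup H, IsOUpper q N ∧ IsRHypoelementary p N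

/-- Every finite group has a largest normal `r`-subgroup. -/
lemma exists_isOLower (r : ℕ) (G : Type*) [Group G] [Finite G] :
    ∃ N : Subgroup G, IsOLower r N := by
  classical
  haveI : Fintype G := Fintype.ofFinite G
  let S : Finset (Subgroup G) :=
    Finset.univ.filter (fun M => M.Normal ∧ IsPGroup r M)
  have hsup : (S.sup id).Normal ∧ IsPGroup r (↥(S.sup id)) := by
    refine Finset.sup_induction (p := fun M : Subgroup G => M.Normal ∧ IsPGroup r M)
      ⟨inferInstance, IsPGroup.of_bot⟩ ?_ ?_
    · rintro a ⟨han, hap⟩ b ⟨hbn, hbp⟩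
      haveI := han; haveI := hbn
      exact ⟨inferInstance, hap.to_sup_of_normal_right hbp⟩
    · intro M hM
      simpa [S] using (Finset.mem_filter.mp hM).2
  refine ⟨S.sup id, hsup.1, hsup.2, fun M hMn hMp => ?_⟩
  have : M ∈ S := by simp [S, hMn, hMp]
  exact Finset.le_sup (f := id) this

/-- Surjective images of finite `r`-hypoelementary groups are `r`-hypoelementary. -/
lemma isRHypoelementary_of_surjective {r : ℕ} {G G' : Type*} [Group G] [Finite G]
    [Group G'] (f : G →* G') (hf : Function.Surjective f)
    (h : IsRHypoelementary r G) : IsRHypoelementary r G' := by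
  haveI : Finite G' := Finite.of_surjective f hf
  obtain ⟨P, ⟨hPn, hPp, _⟩, hcyc⟩ := h
  obtain ⟨O, hO⟩ := exists_isOLower r G'
  refine ⟨O, hO, ?_⟩
  haveI := hO.1
  haveI := hPn
  have hle : P.map f ≤ O := hO.2.2 _ (hPn.map f hf) (hPp.map f)
  have hker : ∀ x ∈ P, ((QuotientGroup.mk' O).comp f) x = 1 := by
    intro x hx
    exact (QuotientGroup.eq_one_iff _).mpr (hle ⟨x, hx, rfl⟩)
  exact isCyclic_of_surjective (QuotientGroup.lift P ((QuotientGroup.mk' O).comp f) hker)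
    (fun y => by
      obtain ⟨g, hg⟩ := (QuotientGroup.mk'_surjective O) y
      obtain ⟨x, hx⟩ := hf g
      exact ⟨QuotientGroup.mk x, by rw [← hg, ← hx]; rfl⟩)

/-- Quotients of `q`-Dress finite groups are `q`-Dress. -/
theorem qDress_quotient (p q : ℕ) (hp : p.Prime) (hq : q.Prime)
    (H : Type*) [Group H] [Finite H] (N : Subgroup H) (hN : N.Normal)
    (hH : IsQDress p q H) :
    letI := hN
    IsQDress p q (H ⧸ N) := by
  letI := hN
  obtain ⟨K, ⟨hKn, hKq, hKmin⟩, hKhypo⟩ := hH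
  haveI := hKn
  let π : H →* H ⧸ N := QuotientGroup.mk' N
  have hπ : Function.Surjective π := QuotientGroup.mk'_surjective N
  refine ⟨K.map π, ⟨hKn.map π hπ, ?_, ?_⟩, ?_⟩
  · -- (H⧸N) ⧸ (K.map π) is a q-group
    haveI := hKn.map π hπ
    have hker : ∀ x ∈ K, ((QuotientGroup.mk' (K.map π)).comp π) x = 1 := by
      intro x hx
      exact (QuotientGroup.eq_one_iff _).mpr ⟨x, hx, rfl⟩
    have hsurj : Function.Surjective
        (QuotientGroup.lift K ((QuotientGroup.mk' (K.map π)).comp π) hker) := by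
      intro y
      obtain ⟨g, hg⟩ := QuotientGroup.mk'_surjective (K.map π) y
      obtain ⟨x, hx⟩ := hπ g
      exact ⟨QuotientGroup.mk x, by rw [← hg, ← hx]; rfl⟩
    exact hKq.of_surjective _ hsurj
  · -- minimality
    intro M hM hMq
    haveI := hM
    have hMcn : (M.comap π).Normal := hM.comap π
    have hKle : K ≤ M.comap π := by
      refine hKmin _ hMcn ?_
      have hker : ((QuotientGroup.mk' M).comp π).ker = M.comap π := by
        rw [← MonoidHom.comap_ker, QuotientGroup.ker_mk']
      have hsurj : Function.Surjective ((QuotientGroup.mk' M).comp π) :=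
        (QuotientGroup.mk'_surjective M).comp hπ
      have e := QuotientGroup.quotientKerEquivOfSurjective _ hsurj
      exact (hMq.of_equiv e.symm).of_equiv (QuotientGroup.quotientMulEquivOfEq hker)
    calc K.map π ≤ (M.comap π).map π := Subgroup.map_mono hKle
      _ = M := Subgroup.map_comap_eq_self_of_surjective hπ M
  · -- K.map π is p-hypoelementary
    exact isRHypoelementary_of_surjective (π.subgroupMap K)
      (π.subgroupMap_surjective K) hKhypo
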